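/- A digraph G belongs to 𝔗_a if and only if every path in G is uniquely determined by its vertex set, i.e., any two paths in G having the same set of vertices coincide as sequences. -/

import Mathlib

/-- A finite digraph: a finite nonempty vertex set `V ⊆ ℕ` together with an
arc set `A ⊆ V × V`. -/
structure Dgraph where
  V : Finset ℕ
  nonempty : V.Nonempty
  A : Finset (ℕ × ℕ)
  A_sub : ∀ p ∈ A, p.1 ∈ V ∧ p.2 ∈ V

namespace Dgraph

/-- The set of proper arcs of `G`, i.e. the arc set of `G*`. -/
def Astar (G : Dgraph) : Finset (ℕ × ℕ) := G.A.filter (fun p => p.1 ≠ p.2)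

/-- `G` is reflexive. -/
def IsRefl (G : Dgraph) : Prop := ∀ v ∈ G.V, (v, v) ∈ G.A

/-- `p` is a path in `G` (a nonempty list of pairwise distinct vertices,
consecutive ones joined by arcs).  Its length as a path is `p.length - 1`. -/
def IsPath (G : Dgraph) (p : List ℕ) : Prop :=
  p ≠ [] ∧ p.Nodup ∧ (∀ v ∈ p, v ∈ G.V) ∧ p.Chain' (fun v w => (v, w) ∈ G.A)

/-- `p` is a path in `G*`. -/
def IsPathStar (G : Dgraph) (p : List ℕ) : Prop :=
  p ≠ [] ∧ p.Nodup ∧ (∀ v ∈ p, v ∈ G.V) ∧ p.Chain' (fun v w => (v, w) ∈ G.A ∧ v ≠ w)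

/-- `G*` contains a closed walk. -/
def HasClosedWalkStar (G : Dgraph) : Prop :=
  ∃ p : List ℕ, (∀ v ∈ p, v ∈ G.V) ∧ p.Chain' (fun v w => (v, w) ∈ G.A ∧ v ≠ w) ∧
    2 ≤ p.length ∧ p.head? = p.getLast?

/-- membership in the class `𝔗ₐ`: `G*` is acyclic. -/
def MemTa (G : Dgraph) : Prop := ¬ G.HasClosedWalkStar

/-- The height of `G`: the maximal length of a path in `G`. -/
noncomputable def height (G : Dgraph) : ℕ :=
  sSup {n | ∃ p, G.IsPath p ∧ p.length = n + 1}

/-- The interval `[v,w]_G`. -/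
def interval (G : Dgraph) (v w : ℕ) : Finset ℕ :=
  G.V.filter (fun z => (v, z) ∈ G.A ∧ (z, w) ∈ G.A)

/-- `ι(v,w)_G`, the cardinality of the interval `[v,w]_G`. -/
def iota (G : Dgraph) (v w : ℕ) : ℕ := (G.interval v w).card

/-- The set `𝓗(G,H)` of homomorphisms from `G` to `H` (represented as total
maps `ℕ → ℕ`, normalized to `0` outside of `V(G)`). -/
def Hom (G H : Dgraph) : Set (ℕ → ℕ) :=
  {f | (∀ v ∈ G.V, f v ∈ H.V) ∧ (∀ p ∈ G.A, (f p.1, f p.2) ∈ H.A) ∧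
    ∀ v, v ∉ G.V → f v = 0}

/-- The set `𝓢(G,H)` of strict homomorphisms from `G` to `H`. -/
def SHom (G H : Dgraph) : Set (ℕ → ℕ) :=
  {f ∈ Hom G H | ∀ p ∈ G.Astar, f p.1 ≠ f p.2}

/-- `μ_ξ(G)`, for a homomorphism `ξ` from `G` into `H`. -/
def mu (G H : Dgraph) (f : ℕ → ℕ) : ℕ :=
  ∑ p ∈ G.Astar, H.iota (f p.1) (f p.2)

/-- `L` is a subgraph of `G`. -/
def Subgraph (L G : Dgraph) : Prop := L.V ⊆ G.V ∧ L.A ⊆ G.A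

/-- Restriction of a map to a vertex set (normalized to `0` outside). -/
def restrict (X : Finset ℕ) (f : ℕ → ℕ) : ℕ → ℕ := fun x => if x ∈ X then f x else 0

/-- `𝓜(L,H)`: homomorphisms from `L` to `H` with maximal `μ`. -/
def MSet (L H : Dgraph) : Set (ℕ → ℕ) :=
  {f ∈ Hom L H | ∀ g ∈ Hom L H, mu L H g ≤ mu L H f}

/-- `𝓜^𝓛(G,H)`. -/
def MLSet (G H : Dgraph) (𝓛 : Set Dgraph) : Set (ℕ → ℕ) :=
  {f ∈ Hom G H | ∀ L ∈ 𝓛, restrict L.V f ∈ MSet L H}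

/-- `𝓙^𝓛_{G,H'}(ξ)` for `ξ ∈ 𝓗(G,H)`. -/
def JSet (G H H' : Dgraph) (𝓛 : Set Dgraph) (ξ : ℕ → ℕ) : Set (ℕ → ℕ) :=
  {ζ ∈ Hom G H' | ∀ L ∈ 𝓛, ∀ p ∈ L.Astar,
    H'.iota (ζ p.1) (ζ p.2) = H.iota (ξ p.1) (ξ p.2)}

/-- The digraph `P_×` of a path `P = P_0, …, P_ℓ`: vertex set `{P_0,…,P_ℓ}`
and arcs `P_{i-1}P_i`. -/
def pathGraph (P : List ℕ) (h : P ≠ []) : Dgraph where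
  V := P.toFinset
  nonempty := by
    obtain ⟨a, t, rfl⟩ := List.exists_cons_of_ne_nil h
    exact ⟨a, by simp⟩
  A := (P.zip P.tail).toFinset
  A_sub := by
    intro p hp
    rw [List.mem_toFinset] at hp
    have h1 := List.of_mem_zip hp
    exact ⟨List.mem_toFinset.mpr h1.1, List.mem_toFinset.mpr (List.mem_of_mem_tail h1.2)⟩

/-- `𝓛(G)`: the set of the digraphs `P_×` for the paths `P` of length `h_G` in `G`. -/
def LSet (G : Dgraph) : Set Dgraph :=
  {D | ∃ (P : List ℕ) (h : P ≠ []), G.IsPath P ∧ P.length = G.height + 1 ∧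
    D = pathGraph P h}

/-- The class `𝕽`: reflexive digraphs `R ∈ 𝔗ₐ` with
`𝓜^{𝓛(R)}(R,R) ∩ 𝓢(R,R) ≠ ∅`. -/
def MemR (R : Dgraph) : Prop :=
  R.MemTa ∧ R.IsRefl ∧ (MLSet R R (LSet R) ∩ SHom R R).Nonempty

/-- `G` is a poset: reflexive, antisymmetric and transitive. -/
def IsPoset (G : Dgraph) : Prop :=
  G.IsRefl ∧ (∀ v w, (v, w) ∈ G.A → (w, v) ∈ G.A → v = w) ∧
    (∀ u v w, (u, v) ∈ G.A → (v, w) ∈ G.A → (u, w) ∈ G.A)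

/-- The class `𝔗ₐ^{=n}`: digraphs in `𝔗ₐ` of height `n` in which every vertex
lies on a path of length `n`. -/
def MemTaEq (n : ℕ) (G : Dgraph) : Prop :=
  G.MemTa ∧ G.height = n ∧ ∀ v ∈ G.V, ∃ p, G.IsPath p ∧ p.length = n + 1 ∧ v ∈ p

/-- A maximal path in `G`: no path in `G` properly contains its vertex set. -/
def MaximalPath (G : Dgraph) (P : List ℕ) : Prop :=
  G.IsPath P ∧ ∀ Q, G.IsPath Q → (∀ v ∈ P, v ∈ Q) → ∀ v ∈ Q, v ∈ P

end Dgraph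

open Dgraph


namespace Stmt14Aux

open List

lemma chain'_and_ne {α : Type*} {R : α → α → Prop} {l : List α}
    (hnd : l.Nodup) (h : l.Chain' R) : l.Chain' (fun a b => R a b ∧ a ≠ b) := by
  simp only [List.Chain'] at h ⊢
  rw [List.isChain_iff_getElem] at h ⊢
  intro i hi
  refine ⟨h i hi, fun he => ?_⟩
  have := (List.Nodup.getElem_inj_iff hnd).mp he
  omega

lemma dup_decomp : ∀ (l : List ℕ), ¬l.Nodup →
    ∃ x l1 l2 l3, l = l1 ++ x :: l2 ++ x :: l3 := by
  intro l
  induction l with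
  | nil => intro h; exact absurd List.nodup_nil h
  | cons a t ih =>
    intro h
    rw [List.nodup_cons] at h
    push_neg at h
    by_cases ha : a ∈ t
    · obtain ⟨l2, l3, rfl⟩ := List.append_of_mem ha
      exact ⟨a, [], l2, l3, rfl⟩
    · obtain ⟨x, l1, l2, l3, rfl⟩ := ih (h ha)
      exact ⟨x, a :: l1, l2, l3, rfl⟩

/-- a path yields a chain of proper arcs -/
lemma star_chain {G : Dgraph} {p : List ℕ} (hp : G.IsPath p) :
    p.Chain' (fun v w => (v, w) ∈ G.A ∧ v ≠ w) :=
  chain'_and_ne hp.2.1 hp.2.2.2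

lemma isPath_tail {G : Dgraph} {x : ℕ} {l : List ℕ} (h : G.IsPath (x :: l)) (hl : l ≠ []) :
    G.IsPath l :=
  ⟨hl, h.2.1.of_cons, fun v hv => h.2.2.1 v (List.mem_cons_of_mem _ hv), h.2.2.2.tail⟩

lemma heads_eq {G : Dgraph} (hTa : G.MemTa) {a b : ℕ} {ps qs : List ℕ}
    (hp : G.IsPath (a :: ps)) (hq : G.IsPath (b :: qs))
    (hab : a ∈ b :: qs) (hba : b ∈ a :: ps) : a = b := by
  by_contra hne
  obtain ⟨s, t, hst⟩ := List.append_of_mem hba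
  obtain ⟨u, v, huv⟩ := List.append_of_mem hab
  cases s with
  | nil =>
    simp only [List.nil_append, List.cons.injEq] at hst
    exact hne hst.1
  | cons s0 s' =>
  cases u with
  | nil =>
    simp only [List.nil_append, List.cons.injEq] at huv
    exact hne huv.1.symm
  | cons u0 u' =>
  simp only [List.cons_append, List.cons.injEq] at hst huv
  obtain ⟨rfl, hps⟩ := hst
  obtain ⟨rfl, hqs⟩ := huv
  -- star chains
  have chp := star_chain hp
  have chq := star_chain hq
  rw [hps] at chp
  rw [hqs] at chq
  -- prefixes
  have chw1 : (a :: (s' ++ [b])).Chain' (fun v w => (v, w) ∈ G.A ∧ v ≠ w) := by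
    refine chp.prefix ⟨t, by simp⟩
  have chw2 : (b :: (u' ++ [a])).Chain' (fun v w => (v, w) ∈ G.A ∧ v ≠ w) := by
    refine chq.prefix ⟨v, by simp⟩
  simp only [List.Chain'] at chw2
  rw [List.isChain_cons] at chw2
  refine hTa ⟨(a :: (s' ++ [b])) ++ (u' ++ [a]), ?_, ?_, ?_, ?_⟩
  · intro x hx
    have hx' : x ∈ a :: ps ∨ x ∈ b :: qs := by
      simp only [hps, hqs, List.mem_append, List.mem_cons, List.mem_singleton] at hx ⊢
      tauto
    rcases hx' with h | h
    · exact hp.2.2.1 x h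
    · exact hq.2.2.1 x h
  · refine List.IsChain.append chw1 chw2.2 ?_
    intro x hx y hy
    have hxb : x = b := by
      rw [show a :: (s' ++ [b]) = (a :: s') ++ [b] by simp, List.getLast?_concat] at hx
      simpa [eq_comm] using hx
    subst hxb
    exact chw2.1 y hy
  · simp only [List.length_append, List.length_cons, List.length_nil]
    omega
  · rw [show (a :: (s' ++ [b])) ++ (u' ++ [a]) = ((a :: (s' ++ [b])) ++ u') ++ [a] by simp]
    rw [List.getLast?_concat]
    rfl

lemma forward {G : Dgraph} (hTa : G.MemTa) :
    ∀ p q : List ℕ, G.IsPath p → G.IsPath q → (∀ v, v ∈ p ↔ v ∈ q) → p = q := by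
  intro p
  induction p with
  | nil => intro q hp _ _; exact absurd rfl hp.1
  | cons a ps ih =>
    intro q hp hq hset
    cases q with
    | nil => exact absurd rfl hq.1
    | cons b qs =>
      have hab : a = b :=
        heads_eq hTa hp hq ((hset a).1 (List.mem_cons_self))
          ((hset b).2 (List.mem_cons_self))
      subst hab
      have hsets' : ∀ v, v ∈ ps ↔ v ∈ qs := by
        intro v
        constructor
        · intro hv
          have : v ∈ a :: qs := (hset v).1 (List.mem_cons_of_mem _ hv)
          rcases List.mem_cons.mp this with rfl | h
          · exact absurd hv ((List.nodup_cons.mp hp.2.1).1)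
          · exact h
        · intro hv
          have : v ∈ a :: ps := (hset v).2 (List.mem_cons_of_mem _ hv)
          rcases List.mem_cons.mp this with rfl | h
          · exact absurd hv ((List.nodup_cons.mp hq.2.1).1)
          · exact h
      cases hps : ps with
      | nil =>
        cases hqs : qs with
        | nil => rfl
        | cons c cs =>
          have : c ∈ ps := (hsets' c).2 (by rw [hqs]; exact List.mem_cons_self)
          rw [hps] at this
          exact absurd this List.not_mem_nil
      | cons c cs =>
        cases hqs : qs with
        | nil =>
          have : c ∈ qs := (hsets' c).1 (by rw [hps]; exact List.mem_cons_self)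
          rw [hqs] at this
          exact absurd this List.not_mem_nil
        | cons d ds =>
          subst hps hqs
          rw [ih (d :: ds) (isPath_tail hp (by simp)) (isPath_tail hq (by simp)) hsets']

lemma cycle_exists_aux (G : Dgraph) :
    ∀ n (w : List ℕ), w.length ≤ n → (∀ v ∈ w, v ∈ G.V) →
      w.Chain' (fun v w => (v, w) ∈ G.A ∧ v ≠ w) → 2 ≤ w.length → w.head? = w.getLast? →
      ∃ v0 m, m ≠ [] ∧ (v0 :: m).Nodup ∧ (∀ x ∈ v0 :: m, x ∈ G.V) ∧
        (v0 :: (m ++ [v0])).Chain' (fun v w => (v, w) ∈ G.A ∧ v ≠ w) := by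
  intro n
  induction n with
  | zero => intro w hw _ _ hlen _; omega
  | succ n ih =>
    intro w hw hV hch hlen hco
    cases w with
    | nil => simp at hlen
    | cons v0 t =>
    have ht : t ≠ [] := by rintro rfl; simp at hlen
    have hlast : t.getLast ht = v0 := by
      rw [List.getLast?_eq_getLast_of_ne_nil (List.cons_ne_nil v0 t),
        List.getLast_cons ht] at hco
      simpa using hco.symm
    obtain ⟨m, hm⟩ : ∃ m, t = m ++ [v0] :=
      ⟨t.dropLast, by rw [← hlast]; exact (List.dropLast_append_getLast ht).symm⟩
    subst hm
    by_cases hnd : (v0 :: m).Nodup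
    · have hmne : m ≠ [] := by
        rintro rfl
        simp only [List.nil_append, List.isChain_cons_cons, List.isChain_singleton, and_true] at hch
        exact (List.isChain_cons_cons.mp hch).1.2 rfl
      refine ⟨v0, m, hmne, hnd, ?_, hch⟩
      intro x hx
      refine hV x ?_
      rcases List.mem_cons.mp hx with rfl | hxx
      · simp
      · simp [hxx]
    · obtain ⟨x, l1, l2, l3, hdec⟩ := dup_decomp (v0 :: m) hnd
      have hinf : (x :: (l2 ++ [x])) <:+: (v0 :: (m ++ [v0])) := by
        refine ⟨l1, l3 ++ [v0], ?_⟩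
        rw [show v0 :: (m ++ [v0]) = (v0 :: m) ++ [v0] by simp, hdec]
        simp
      have hlen1 : (v0 :: m).length = l1.length + l2.length + l3.length + 2 := by
        rw [hdec]; simp; omega
      refine ih (x :: (l2 ++ [x])) ?_ ?_ (hch.infix hinf) ?_ ?_
      · have := hw
        simp only [List.length_cons, List.length_append, List.length_singleton] at this ⊢
        simp only [List.length_cons] at hlen1
        omega
      · intro v hv
        exact hV v (hinf.sublist.mem hv)
      · simp
      · rw [show x :: (l2 ++ [x]) = (x :: l2) ++ [x] by simp, List.getLast?_concat]
        rfl

lemma backward {G : Dgraph}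
    (h : ∀ p q : List ℕ, G.IsPath p → G.IsPath q → (∀ v, v ∈ p ↔ v ∈ q) → p = q) :
    G.MemTa := by
  rintro ⟨w, hV, hch, hlen, hco⟩
  obtain ⟨v0, m, hmne, hnd, hVm, hchm⟩ :=
    cycle_exists_aux G w.length w le_rfl hV hch hlen hco
  have hperm : (m ++ [v0]).Perm (v0 :: m) := List.perm_append_singleton _ _
  have hp : G.IsPath (v0 :: m) := by
    refine ⟨List.cons_ne_nil _ _, hnd, hVm, ?_⟩
    have : (v0 :: m).Chain' (fun v w => (v, w) ∈ G.A ∧ v ≠ w) :=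
      hchm.prefix ⟨[v0], by simp⟩
    exact this.imp fun _ _ hab => hab.1
  have hq : G.IsPath (m ++ [v0]) := by
    refine ⟨by simp, hperm.nodup_iff.mpr hnd, ?_, ?_⟩
    · intro v hv; exact hVm v (hperm.mem_iff.mp hv)
    · exact hchm.tail.imp fun _ _ hab => hab.1
  have heq := h _ _ hp hq fun v => by rw [hperm.mem_iff]
  cases m with
  | nil => exact hmne rfl
  | cons m0 m' =>
    simp only [List.cons_append, List.cons.injEq] at heq
    have hmem : v0 ∈ m0 :: m' := by rw [heq.1]; exact List.mem_cons_self
    exact (List.nodup_cons.mp hnd).1 hmem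

end Stmt14Aux


theorem stmt_14 (G : Dgraph) :
    G.MemTa ↔ ∀ p q : List ℕ, G.IsPath p → G.IsPath q →
      (∀ v, v ∈ p ↔ v ∈ q) → p = q := by
  exact ⟨fun h => Stmt14Aux.forward h, fun h => Stmt14Aux.backward h⟩
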